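/- For any prime p and any non-negative integer n, 5·F_{n·p²} ≡ 5·F_n (mod p). -/

import Mathlib

open Polynomial

lemma fib_formula {K : Type*} [CommRing K] (α : K) (hα : α ^ 2 = α + 1) (n : ℕ) :
    (α - (1 - α)) * (Nat.fib n : K) = α ^ n - (1 - α) ^ n := by
  induction n using Nat.twoStepInduction with
  | zero => simp
  | one => simp
  | more n ih1 ih2 =>
    have hβ : (1 - α) ^ 2 = (1 - α) + 1 := by linear_combination hα
    have h1 : α ^ (n + 2) = α ^ (n + 1) + α ^ n := by
      have : α ^ (n + 2) = α ^ n * α ^ 2 := by ring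
      rw [this, hα]; ring
    have h2 : (1 - α) ^ (n + 2) = (1 - α) ^ (n + 1) + (1 - α) ^ n := by
      have : (1 - α) ^ (n + 2) = (1 - α) ^ n * (1 - α) ^ 2 := by ring
      rw [this, hβ]; ring
    rw [Nat.fib_add_two, Nat.cast_add, h1, h2]
    linear_combination ih1 + ih2

theorem five_fib_mul_prime_sq_cong (p : ℕ) (hp : p.Prime) (n : ℕ) :
    5 * Nat.fib (n * p ^ 2) ≡ 5 * Nat.fib n [MOD p] := by
  rcases eq_or_ne p 5 with rfl | hp5
  · have h : ∀ m, 5 * Nat.fib m ≡ 0 [MOD 5] :=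
      fun m => Nat.modEq_zero_iff_dvd.2 ⟨_, rfl⟩
    exact (h _).trans (h n).symm
  · haveI := Fact.mk hp
    set K := AlgebraicClosure (ZMod p) with hK
    obtain ⟨α, hroot⟩ := IsAlgClosed.exists_root (X ^ 2 - X - 1 : K[X])
      (by have : (X ^ 2 - X - 1 : K[X]).degree = 2 := by compute_degree!
          rw [this]; decide)
    have hα : α ^ 2 = α + 1 := by
      have := hroot
      simp [IsRoot, eval_sub, eval_pow] at this
      linear_combination this
    -- Frobenius
    have hchar : CharP K p := by infer_instance
    set φ := frobenius K p with hφ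
    have hφα : φ (φ α) = α := by
      have hroot2 : (φ α) ^ 2 = φ α + 1 := by
        have h := congrArg φ hα
        rw [map_pow, map_add, map_one] at h
        exact h
      have hfact : (φ α - α) * (φ α - (1 - α)) = 0 := by
        have h1 : α * (1 - α) = -1 := by linear_combination -hα
        linear_combination hroot2 + h1
      rcases mul_eq_zero.1 hfact with h | h
      · have h' : φ α = α := sub_eq_zero.1 h
        rw [h', h']
      · have h' : φ α = 1 - α := sub_eq_zero.1 h
        rw [h', map_sub, map_one, h']
        ring
    have hαp2 : α ^ p ^ 2 = α := by
      have : φ (φ α) = α ^ p ^ 2 := by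
        rw [hφ]; simp only [frobenius_def, ← pow_mul, sq]
      rw [← this, hφα]
    have hβp2 : (1 - α) ^ p ^ 2 = 1 - α := by
      have : φ (φ (1 - α)) = (1 - α) ^ p ^ 2 := by
        rw [hφ]; simp only [frobenius_def, ← pow_mul, sq]
      rw [← this, map_sub, map_sub, map_one, map_one, hφα]
    -- main computation
    have key : ((5 * Nat.fib (n * p ^ 2) : ℕ) : K) = ((5 * Nat.fib n : ℕ) : K) := by
      have e1 := fib_formula α hα (n * p ^ 2)
      have e2 := fib_formula α hα n
      have e3 : α ^ (n * p ^ 2) = α ^ n := by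
        rw [mul_comm, pow_mul, hαp2]
      have e4 : (1 - α) ^ (n * p ^ 2) = (1 - α) ^ n := by
        rw [mul_comm, pow_mul, hβp2]
      have e5 : (α - (1 - α)) * (Nat.fib (n * p ^ 2) : K) = (α - (1 - α)) * (Nat.fib n : K) := by
        rw [e1, e2, e3, e4]
      have e6 : (α - (1 - α)) * ((α - (1 - α)) * (Nat.fib (n * p ^ 2) : K))
          = (α - (1 - α)) * ((α - (1 - α)) * (Nat.fib n : K)) := by rw [e5]
      have e7 : (α - (1 - α)) * (α - (1 - α)) = 5 := by linear_combination 4 * hα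
      rw [Nat.cast_mul, Nat.cast_mul, Nat.cast_ofNat]
      calc (5 : K) * (Nat.fib (n * p ^ 2) : K)
          = (α - (1 - α)) * ((α - (1 - α)) * (Nat.fib (n * p ^ 2) : K)) := by
            rw [← mul_assoc, e7]
        _ = (α - (1 - α)) * ((α - (1 - α)) * (Nat.fib n : K)) := e6
        _ = 5 * (Nat.fib n : K) := by rw [← mul_assoc, e7]
    exact (CharP.natCast_eq_natCast K p).1 key
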